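/- For a mixed base β = (β_0, β_1, ...) with each β_L ≥ 2, and nonnegative integers n and h, define r(n,h) = (n + h) ⊖ (n ⊕ h), where ⊕ is digit-wise addition modulo β_L in base β and ⊖ digit-wise subtraction. Then for every digit index L, the L-th digit of r(n,h) in base β is either 0 or 1. -/

import Mathlib

open scoped BigOperators

/-- β̂_L = β_0 ⋯ β_{L-1}, the place value of digit L in mixed base β. -/
def bhat (β : ℕ → ℕ) (L : ℕ) : ℕ := ∏ i ∈ Finset.range L, β i

/-- The L-th digit of n in the mixed base β. -/
def mdigit (β : ℕ → ℕ) (n L : ℕ) : ℕ := n / bhat β L % β L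

/-- Digit-wise addition modulo β_L in mixed base β. -/
def moplus (β : ℕ → ℕ) (n h : ℕ) : ℕ :=
  ∑ L ∈ Finset.range (n + h + 1), ((mdigit β n L + mdigit β h L) % β L) * bhat β L

/-- Digit-wise subtraction modulo β_L in mixed base β. -/
def mominus (β : ℕ → ℕ) (n h : ℕ) : ℕ :=
  ∑ L ∈ Finset.range (n + h + 1), ((β L + mdigit β n L - mdigit β h L) % β L) * bhat β L

/-- σ_β(X) = x^0 ⊕ ⋯ ⊕ x^{m-1}: the digit-wise Nim sum in mixed base β. -/
def msigma (β : ℕ → ℕ) {m : ℕ} (X : Fin m → ℕ) : ℕ :=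
  ∑ L ∈ Finset.range (∑ i, X i + 1), ((∑ i, mdigit β (X i) L) % β L) * bhat β L

/-- Hamming weight: number of nonzero components. -/
def hamwt {m : ℕ} (C : Fin m → ℕ) : ℕ := (Finset.univ.filter (fun i => C i ≠ 0)).card

/-- ord_β(n): the largest L with β̂_L ∣ n (⊤ for n = 0). -/
def mord (β : ℕ → ℕ) (n : ℕ) : ℕ∞ :=
  if n = 0 then ⊤ else (Nat.findGreatest (fun L => bhat β L ∣ n) n : ℕ∞)

/-- 𝒞 is a Sprague-Grundy system of σ_β: its members are nonzero moves and
σ_β satisfies the mex recursion of the take-away game Γ(ℕ^m, 𝒞), i.e. σ_β is the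
Sprague-Grundy function of that game. -/
def IsSGSystem (β : ℕ → ℕ) {m : ℕ} (𝒞 : Set (Fin m → ℕ)) : Prop :=
  (∀ C ∈ 𝒞, C ≠ 0) ∧
  ∀ X : Fin m → ℕ, msigma β X =
    sInf {n : ℕ | ∀ C ∈ 𝒞, (∀ i, C i ≤ X i) → msigma β (fun i => X i - C i) ≠ n}


theorem bhat_succ' (β : ℕ → ℕ) (M : ℕ) : bhat β (M+1) = bhat β M * β M := by
  rw [bhat, Finset.prod_range_succ, ← bhat]

theorem bhat_pos' {β : ℕ → ℕ} (hβ : ∀ L, 2 ≤ β L) (L : ℕ) : 0 < bhat β L :=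
  Finset.prod_pos fun i _ => lt_of_lt_of_le two_pos (hβ i)

theorem two_pow_le_bhat {β : ℕ → ℕ} (hβ : ∀ L, 2 ≤ β L) (L : ℕ) : 2 ^ L ≤ bhat β L := by
  rw [show (2:ℕ)^L = ∏ _i ∈ Finset.range L, 2 by simp]
  exact Finset.prod_le_prod (fun i _ => by norm_num) (fun i _ => hβ i)

theorem lt_bhat {β : ℕ → ℕ} (hβ : ∀ L, 2 ≤ β L) {n L : ℕ} (h : n ≤ L) : n < bhat β L :=
  lt_of_lt_of_le (lt_of_lt_of_le (Nat.lt_two_pow_self (n := n)) (Nat.pow_le_pow_right two_pos h))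
    (two_pow_le_bhat hβ L)

theorem bhat_mono' {β : ℕ → ℕ} (hβ : ∀ L, 2 ≤ β L) {M L : ℕ} (h : M ≤ L) :
    bhat β M ≤ bhat β L := by
  rw [bhat, bhat, ← Finset.prod_range_mul_prod_Ico β h]
  exact Nat.le_mul_of_pos_right _ (Finset.prod_pos fun i _ => lt_of_lt_of_le two_pos (hβ i))

theorem sum_lt_bhat {β : ℕ → ℕ} (hβ : ∀ L, 2 ≤ β L) (f : ℕ → ℕ) (hf : ∀ K, f K < β K) (M : ℕ) :
    ∑ K ∈ Finset.range M, f K * bhat β K < bhat β M := by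
  induction M with
  | zero => simp [bhat]
  | succ M ih =>
    rw [Finset.sum_range_succ, bhat_succ']
    have h1 : f M * bhat β M ≤ (β M - 1) * bhat β M :=
      Nat.mul_le_mul_right _ (by have := hf M; omega)
    have h2 : bhat β M + (β M - 1) * bhat β M = bhat β M * β M := by
      have := hβ M; cases' Nat.exists_eq_add_of_le this with k hk; rw [hk, show 2+k-1 = 1+k by omega]; ring
    omega

theorem mdigit_sum' {β : ℕ → ℕ} (hβ : ∀ L, 2 ≤ β L) (f : ℕ → ℕ) (hf : ∀ K, f K < β K)
    {L N : ℕ} (hL : L < N) :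
    (∑ K ∈ Finset.range N, f K * bhat β K) / bhat β L % β L = f L := by
  have hsplit : ∑ K ∈ Finset.range N, f K * bhat β K
      = (∑ K ∈ Finset.range L, f K * bhat β K) + f L * bhat β L
        + ∑ K ∈ Finset.Ico (L+1) N, f K * bhat β K := by
    rw [← Finset.sum_range_succ]
    simp only [Finset.range_eq_Ico]
    exact (Finset.sum_Ico_consecutive _ (Nat.zero_le _) hL).symm
  have hfac : ∀ K ∈ Finset.Ico (L+1) N, f K * bhat β K
      = (bhat β L * β L) * (f K * ∏ i ∈ Finset.Ico (L+1) K, β i) := by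
    intro K hK
    simp only [Finset.mem_Ico] at hK
    have : bhat β K = bhat β (L+1) * ∏ i ∈ Finset.Ico (L+1) K, β i := by
      rw [bhat, bhat, Finset.prod_range_mul_prod_Ico β hK.1]
    rw [this, bhat_succ']
    ring
  rw [hsplit, Finset.sum_congr rfl hfac, ← Finset.mul_sum]
  set A := ∑ K ∈ Finset.range L, f K * bhat β K with hA
  set V := ∑ K ∈ Finset.Ico (L+1) N, f K * ∏ i ∈ Finset.Ico (L+1) K, β i
  have hApos : A < bhat β L := sum_lt_bhat hβ f hf L
  have hb : 0 < bhat β L := bhat_pos' hβ L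
  have hre : A + f L * bhat β L + bhat β L * β L * V
      = bhat β L * (f L + β L * V) + A := by ring
  rw [hre, Nat.mul_add_div hb, Nat.div_eq_of_lt hApos, Nat.add_zero,
    Nat.add_mul_mod_self_left, Nat.mod_eq_of_lt (hf L)]

theorem expand' {β : ℕ → ℕ} (hβ : ∀ L, 2 ≤ β L) (n N : ℕ) (hN : n ≤ N) :
    ∑ K ∈ Finset.range N, (n / bhat β K % β K) * bhat β K = n := by
  have key : ∀ M, ∑ K ∈ Finset.range M, (n / bhat β K % β K) * bhat β K = n % bhat β M := by
    intro M
    induction M with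
    | zero => simp [bhat]; omega
    | succ M ih =>
      rw [Finset.sum_range_succ, ih, bhat_succ']
      have hcomm : bhat β M * (n / bhat β M % β M) = (n / bhat β M % β M) * bhat β M := Nat.mul_comm _ _
      have h1 : n % (bhat β M * β M) / bhat β M = n / bhat β M % β M :=
        Nat.mod_mul_right_div_self n _ _
      have h2 : n % (bhat β M * β M) % bhat β M = n % bhat β M :=
        Nat.mod_mod_of_dvd n (dvd_mul_right _ _)
      have h3 := Nat.div_add_mod (n % (bhat β M * β M)) (bhat β M)
      rw [h1, h2, hcomm] at h3
      omega
  rw [key N, Nat.mod_eq_of_lt (lt_bhat hβ hN)]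

theorem carry_key' (q xq c : ℕ) (hq : 2 ≤ q) (hxq : xq < q) (hc : c ≤ 1) :
    (q + (xq + c) % q - xq) % q = c := by
  interval_cases c
  · rw [Nat.add_zero, Nat.mod_eq_of_lt hxq, Nat.add_sub_cancel, Nat.mod_self]
  · rcases Nat.lt_or_ge (xq + 1) q with hlt | hge
    · rw [Nat.mod_eq_of_lt hlt, show q + (xq + 1) - xq = q + 1 by omega,
        Nat.add_mod_left, Nat.mod_eq_of_lt (by omega)]
    · have heq : xq + 1 = q := by omega
      rw [heq, Nat.mod_self, show q + 0 - xq = 1 by omega, Nat.mod_eq_of_lt (by omega)]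

theorem carry_div' (b n h : ℕ) (hb : 0 < b) :
    (n + h) / b = n / b + h / b + (n % b + h % b) / b ∧ (n % b + h % b) / b ≤ 1 := by
  constructor
  · have e : n + h = b * (n / b + h / b) + (n % b + h % b) := by
      rw [Nat.mul_add]
      have h1 := Nat.div_add_mod n b
      have h2 := Nat.div_add_mod h b
      omega
    rw [e, Nat.mul_add_div hb]
  · have h1 : n % b < b := Nat.mod_lt _ hb
    have h2 : h % b < b := Nat.mod_lt _ hb
    have := (Nat.div_lt_iff_lt_mul hb).mpr (show n % b + h % b < 2 * b by omega)
    omega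

/-- Each digit of the carry sequence r(n,h) = (n+h) ⊖ (n ⊕ h) is 0 or 1. -/
theorem stmt0 (β : ℕ → ℕ) (hβ : ∀ L, 2 ≤ β L) (n h L : ℕ) :
    mdigit β (mominus β (n + h) (moplus β n h)) L = 0 ∨
    mdigit β (mominus β (n + h) (moplus β n h)) L = 1 := by
  classical
  set p := moplus β n h with hp
  set N := (n + h) + p + 1 with hN
  have hβpos : ∀ K, 0 < β K := fun K => lt_of_lt_of_le two_pos (hβ K)
  -- digits of p
  have hpd : ∀ K, K < n + h + 1 → mdigit β p K = (mdigit β n K + mdigit β h K) % β K := by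
    intro K hK
    have := mdigit_sum' hβ (fun K => (mdigit β n K + mdigit β h K) % β K)
      (fun K => Nat.mod_lt _ (hβpos K)) hK
    rw [hp]
    simp only [moplus, mdigit] at this ⊢
    exact this
  -- p ≤ n + h
  have hple : p ≤ n + h := by
    have h1 : p ≤ ∑ K ∈ Finset.range (n + h + 1),
        (mdigit β n K * bhat β K + mdigit β h K * bhat β K) := by
      refine Finset.sum_le_sum fun K _ => ?_
      rw [← Nat.add_mul]
      exact Nat.mul_le_mul_right _ (Nat.mod_le _ _)
    rw [Finset.sum_add_distrib] at h1
    have h2 := expand' hβ n (n + h + 1) (by omega)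
    have h3 := expand' hβ h (n + h + 1) (by omega)
    simp only [mdigit] at *
    omega
  -- the summand of mominus
  set g : ℕ → ℕ := fun K => (β K + mdigit β (n + h) K - mdigit β p K) % β K with hg
  have hgf : ∀ K, g K < β K := fun K => Nat.mod_lt _ (hβpos K)
  have hmom : mominus β (n + h) p = ∑ K ∈ Finset.range N, g K * bhat β K := rfl
  by_cases hLN : L < N
  · -- digit formula applies
    have hdig : mdigit β (mominus β (n + h) p) L = g L := by
      have := mdigit_sum' hβ g hgf hLN
      rw [hmom]
      simpa [mdigit] using this
    rw [hdig]
    by_cases hLs : L ≤ n + h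
    · -- carry case
      set b := bhat β L with hb
      have hbpos : 0 < b := bhat_pos' hβ L
      obtain ⟨hdiv, hcle⟩ := carry_div' b n h hbpos
      set c := (n % b + h % b) / b with hc
      have hdps : mdigit β (n + h) L = (n / b + h / b + c) % β L := by
        simp only [mdigit, ← hb, hdiv]
      have hdpL : mdigit β p L = (n / b + h / b) % β L := by
        rw [hpd L (by omega), show mdigit β n L = n / b % β L from rfl,
          show mdigit β h L = h / b % β L from rfl, ← Nat.add_mod]
      have hgL : g L = c := by
        rw [hg]
        simp only
        rw [hdps, hdpL]
        have hx : (n / b + h / b + c) % β L = ((n / b + h / b) % β L + c) % β L := by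
          conv_lhs => rw [Nat.add_mod, Nat.mod_eq_of_lt (show c < β L by have := hβ L; omega)]
        rw [hx]
        exact carry_key' (β L) _ c (hβ L) (Nat.mod_lt _ (hβpos L)) hcle
      rw [hgL]
      omega
    · -- high digits: both digits are zero
      left
      have hlt1 : n + h < bhat β L := lt_bhat hβ (show n + h ≤ L by omega)
      have hz1 : mdigit β (n + h) L = 0 := by
        simp only [mdigit, Nat.div_eq_of_lt hlt1, Nat.zero_mod]
      have hz2 : mdigit β p L = 0 := by
        simp only [mdigit, Nat.div_eq_of_lt (lt_of_le_of_lt hple hlt1), Nat.zero_mod]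
      rw [hg]
      simp only [hz1, hz2, Nat.add_zero, Nat.sub_zero, Nat.mod_self]
  · -- beyond all digits: value is smaller than bhat β L
    left
    have hlt : mominus β (n + h) p < bhat β L := by
      rw [hmom]
      exact lt_of_lt_of_le (sum_lt_bhat hβ g hgf N) (bhat_mono' hβ (show N ≤ L by omega))
    simp only [mdigit, Nat.div_eq_of_lt hlt, Nat.zero_mod]
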